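/- In a multi-queue multi-server system with traffic slackness ε, i.e., λ_n + ε ≤ ∑_{σ ∈ Σ} φ_σ ∑_{k ∈ B_n} σ_k μ_k for all queues n and some probability distribution φ over Σ, and with the weight W_σ(t) = ∑_n Q_n(t) ∑_{k ∈ B_n} σ_k μ_k: for any period t and chosen feasible schedule σ(t), ∑_n λ_n Q_n(t) − W_{σ(t)}(t) ≤ −ε·∑_n Q_n(t) + M_Σ² + Δ(t)·‖Q(t)‖_∞, where M_Σ = max_{σ ∈ Σ} ∑_n ∑_{k ∈ B_n} σ_k and Δ(t) = (W_{σ^MW(t)}(t) − W_{σ(t)}(t))/‖Q(t)‖_∞ (and Δ(t) = 0 when ‖Q(t)‖_∞ = 0) with σ^MW(t) the weight-maximizing feasible schedule. -/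

import Mathlib

/-- Lemma (multi-queue multi-server weight bound): under traffic slackness ε witnessed by a
distribution φ over the feasible schedule set `Sig`, for any chosen feasible schedule `σsel`
and the MaxWeight feasible schedule `σMW`, the weight loss obeys
`∑ λ_n Q_n − W(σsel) ≤ −ε ∑ Q_n + M_Σ² + Δ · ‖Q‖_∞`. -/
theorem stmt_17 {Nq Ks : Type*} [Fintype Nq] [Fintype Ks] [DecidableEq Nq] [DecidableEq Ks]
    (B : Ks → Nq) (Sig : Finset (Finset Ks))
    (hsub : ∀ σ ∈ Sig, ∀ σ' ⊆ σ, σ' ∈ Sig)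
    (μs : Ks → ℝ) (hμ0 : ∀ k, 0 ≤ μs k) (hμ1 : ∀ k, μs k ≤ 1)
    (Q : Nq → ℕ) (lam : Nq → ℝ) (ε : ℝ) (hε : 0 < ε)
    (φ : Finset Ks → ℝ)
    (hφ0 : ∀ σ ∈ Sig, 0 ≤ φ σ) (hφ1 : ∑ σ ∈ Sig, φ σ = 1)
    (hslack : ∀ n, lam n + ε ≤
      ∑ σ ∈ Sig, φ σ * ∑ k ∈ σ.filter (fun k => B k = n), μs k)
    (MSig : ℕ) (hM : ∀ σ ∈ Sig, σ.card ≤ MSig)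
    (W : Finset Ks → ℝ)
    (hW : ∀ σ, W σ = ∑ k ∈ σ, (Q (B k) : ℝ) * μs k)
    (σMW σsel : Finset Ks)
    (hMWmem : σMW ∈ Sig)
    (hMWfeas : ∀ n, (σMW.filter (fun k => B k = n)).card ≤ Q n)
    (hMWopt : ∀ σ ∈ Sig, (∀ n, (σ.filter (fun k => B k = n)).card ≤ Q n) → W σ ≤ W σMW)
    (hselmem : σsel ∈ Sig)
    (hselfeas : ∀ n, (σsel.filter (fun k => B k = n)).card ≤ Q n)
    (Δ : ℝ)
    (hΔ : Δ = if (Finset.univ.sup Q : ℕ) = 0 then 0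
      else (W σMW - W σsel) / ((Finset.univ.sup Q : ℕ) : ℝ)) :
    ∑ n, lam n * (Q n : ℝ) - W σsel
      ≤ -ε * ∑ n, (Q n : ℝ) + (MSig : ℝ) ^ 2 + Δ * ((Finset.univ.sup Q : ℕ) : ℝ) := by
  classical
  -- W expressed fiberwise over queues
  have hWfib : ∀ σ : Finset Ks,
      W σ = ∑ n, (Q n : ℝ) * ∑ k ∈ σ.filter (fun k => B k = n), μs k := by
    intro σ
    rw [hW, ← Finset.sum_fiberwise σ B (fun k => (Q (B k) : ℝ) * μs k)]
    refine Finset.sum_congr rfl fun n _ => ?_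
    rw [Finset.mul_sum]
    refine Finset.sum_congr rfl fun k hk => ?_
    rw [Finset.mem_filter] at hk
    rw [hk.2]
  -- per-schedule bound: W σ ≤ W σMW + MSig^2
  have hbound : ∀ σ ∈ Sig, W σ ≤ W σMW + (MSig : ℝ) ^ 2 := by
    intro σ hσ
    set σ' := σ.filter (fun k => (σ.filter (fun j => B j = B k)).card ≤ Q (B k)) with hσ'def
    have hsub' : σ' ⊆ σ := Finset.filter_subset _ _
    have hmem' : σ' ∈ Sig := hsub σ hσ σ' hsub'
    have hfeas' : ∀ n, (σ'.filter (fun k => B k = n)).card ≤ Q n := by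
      intro n
      by_cases h : (σ.filter (fun k => B k = n)).card ≤ Q n
      · refine le_trans (Finset.card_le_card ?_) h
        intro k hk
        rw [Finset.mem_filter] at hk ⊢
        exact ⟨hsub' hk.1, hk.2⟩
      · have : σ'.filter (fun k => B k = n) = ∅ := by
          ext k
          simp only [Finset.mem_filter, Finset.notMem_empty, iff_false, hσ'def]
          rintro ⟨⟨hkσ, hcard⟩, hBk⟩
          rw [hBk] at hcard
          exact h hcard
        rw [this]
        simp
    have hle' : W σ' ≤ W σMW := hMWopt σ' hmem' hfeas'
    -- dropped weight bound
    have hdrop : W σ - W σ' = ∑ k ∈ σ \ σ', (Q (B k) : ℝ) * μs k := by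
      rw [hW, hW, ← Finset.sum_sdiff hsub']
      ring
    have hterm : ∀ k ∈ σ \ σ', (Q (B k) : ℝ) * μs k ≤ (MSig : ℝ) := by
      intro k hk
      rw [Finset.mem_sdiff] at hk
      have hk1 : k ∈ σ := hk.1
      have hk2 : ¬ ((σ.filter (fun j => B j = B k)).card ≤ Q (B k)) := by
        intro hc
        exact hk.2 (Finset.mem_filter.mpr ⟨hk1, hc⟩)
      have hQlt : Q (B k) < (σ.filter (fun j => B j = B k)).card := lt_of_not_ge hk2
      have hQM : Q (B k) ≤ MSig :=
        le_trans (le_of_lt hQlt) (le_trans (Finset.card_le_card (Finset.filter_subset _ _)) (hM σ hσ))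
      calc (Q (B k) : ℝ) * μs k ≤ (Q (B k) : ℝ) * 1 :=
            mul_le_mul_of_nonneg_left (hμ1 k) (Nat.cast_nonneg _)
        _ = (Q (B k) : ℝ) := mul_one _
        _ ≤ (MSig : ℝ) := Nat.cast_le.mpr hQM
    have hcardsd : ((σ \ σ').card : ℝ) ≤ (MSig : ℝ) := by
      exact_mod_cast le_trans (Finset.card_le_card (Finset.sdiff_subset)) (hM σ hσ)
    have hsum : ∑ k ∈ σ \ σ', (Q (B k) : ℝ) * μs k ≤ ((σ \ σ').card : ℝ) * (MSig : ℝ) := by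
      have := Finset.sum_le_card_nsmul (σ \ σ') (fun k => (Q (B k) : ℝ) * μs k) (MSig : ℝ) hterm
      simpa [nsmul_eq_mul] using this
    have hM2 : ((σ \ σ').card : ℝ) * (MSig : ℝ) ≤ (MSig : ℝ) ^ 2 := by
      have : ((σ \ σ').card : ℝ) * (MSig : ℝ) ≤ (MSig : ℝ) * (MSig : ℝ) :=
        mul_le_mul_of_nonneg_right hcardsd (Nat.cast_nonneg _)
      linarith [sq (MSig : ℝ)]
    nlinarith [hsum, hM2, hdrop, hle']
  -- main chain
  have hmain : ∑ n, lam n * (Q n : ℝ) + ε * ∑ n, (Q n : ℝ) ≤ W σMW + (MSig : ℝ) ^ 2 := by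
    have h1 : ∑ n, (lam n + ε) * (Q n : ℝ)
        ≤ ∑ n, (Q n : ℝ) * ∑ σ ∈ Sig, φ σ * ∑ k ∈ σ.filter (fun k => B k = n), μs k := by
      refine Finset.sum_le_sum fun n _ => ?_
      rw [mul_comm]
      exact mul_le_mul_of_nonneg_left (hslack n) (Nat.cast_nonneg _)
    have h2 : ∑ n, (Q n : ℝ) * ∑ σ ∈ Sig, φ σ * ∑ k ∈ σ.filter (fun k => B k = n), μs k
        = ∑ σ ∈ Sig, φ σ * W σ := by
      simp_rw [Finset.mul_sum]
      rw [Finset.sum_comm]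
      refine Finset.sum_congr rfl fun σ _ => ?_
      rw [hWfib σ, Finset.mul_sum]
      refine Finset.sum_congr rfl fun n _ => ?_
      rw [Finset.mul_sum, Finset.mul_sum]
      exact Finset.sum_congr rfl fun k _ => by ring
    have h3 : ∑ σ ∈ Sig, φ σ * W σ ≤ ∑ σ ∈ Sig, φ σ * (W σMW + (MSig : ℝ) ^ 2) :=
      Finset.sum_le_sum fun σ hσ => mul_le_mul_of_nonneg_left (hbound σ hσ) (hφ0 σ hσ)
    have h4 : ∑ σ ∈ Sig, φ σ * (W σMW + (MSig : ℝ) ^ 2) = W σMW + (MSig : ℝ) ^ 2 := by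
      rw [← Finset.sum_mul, hφ1, one_mul]
    have h5 : ∑ n, (lam n + ε) * (Q n : ℝ)
        = ∑ n, lam n * (Q n : ℝ) + ε * ∑ n, (Q n : ℝ) := by
      rw [Finset.mul_sum, ← Finset.sum_add_distrib]
      exact Finset.sum_congr rfl fun n _ => by ring
    linarith
  -- Δ identity
  have hdelta : W σMW - W σsel = Δ * ((Finset.univ.sup Q : ℕ) : ℝ) := by
    by_cases h0 : (Finset.univ.sup Q : ℕ) = 0
    · have hQz : ∀ n, Q n = 0 := fun n =>
        Nat.le_zero.mp (h0 ▸ Finset.le_sup (Finset.mem_univ n))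
      have hWz : ∀ σ : Finset Ks, W σ = 0 := fun σ => by
        rw [hW]
        exact Finset.sum_eq_zero fun k _ => by rw [hQz]; simp
      rw [hWz, hWz, hΔ]
      simp [h0]
    · rw [hΔ, if_neg h0, div_mul_cancel₀]
      exact Nat.cast_ne_zero.mpr h0
  linarith [hmain, hdelta]
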